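/- Let d ≥ 1 and T > 0, and let γ : [0,T] → ℝ^d be a C¹ curve with ‖γ′(s)‖ < 1 for every s ∈ [0,T]. Then there exists a continuous map Γ : [0,T] × [0,T] → ℝ^d such that: Γ(0,s) = γ(s) for all s; Γ(T,s) = γ(0) + (s/T)·(γ(T) − γ(0)) for all s; Γ(u,0) = γ(0) and Γ(u,T) = γ(T) for every u ∈ [0,T]; and for every u ∈ [0,T] the curve s ↦ Γ(u,s) is differentiable at every s ∈ [0,T] \ {u} with ‖∂_s Γ(u,s)‖ < 1. -/

import Mathlib

/-- Let `d ≥ 1`, `T > 0`, and let `γ : [0,T] → ℝ^d` be a `C¹` curve (with derivative `γ'`,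
continuous on `[0,T]`) satisfying `‖γ' s‖ < 1` for all `s ∈ [0,T]`. Then there is a
continuous map `Γ : [0,T] × [0,T] → ℝ^d` with `Γ 0 s = γ s`, `Γ T s` the straight-line
parametrization from `γ 0` to `γ T`, fixed endpoints `Γ u 0 = γ 0`, `Γ u T = γ T`, and
such that for every `u`, the curve `s ↦ Γ u s` is differentiable at every
`s ∈ [0,T] \ {u}` with speed `< 1`. -/
theorem flrw_flat_homotopy_to_segment
    (d : ℕ) (hd : 1 ≤ d) (T : ℝ) (hT : 0 < T)
    (γ γ' : ℝ → EuclideanSpace ℝ (Fin d))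
    (hderiv : ∀ s ∈ Set.Icc (0:ℝ) T, HasDerivWithinAt γ (γ' s) (Set.Icc (0:ℝ) T) s)
    (hcont : ContinuousOn γ' (Set.Icc (0:ℝ) T))
    (hspeed : ∀ s ∈ Set.Icc (0:ℝ) T, ‖γ' s‖ < 1) :
    ∃ Γ : ℝ → ℝ → EuclideanSpace ℝ (Fin d),
      ContinuousOn (fun p : ℝ × ℝ => Γ p.1 p.2) (Set.Icc (0:ℝ) T ×ˢ Set.Icc (0:ℝ) T) ∧
      (∀ s ∈ Set.Icc (0:ℝ) T, Γ 0 s = γ s) ∧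
      (∀ s ∈ Set.Icc (0:ℝ) T, Γ T s = γ 0 + (s / T) • (γ T - γ 0)) ∧
      (∀ u ∈ Set.Icc (0:ℝ) T, Γ u 0 = γ 0 ∧ Γ u T = γ T) ∧
      (∀ u ∈ Set.Icc (0:ℝ) T, ∀ s ∈ Set.Icc (0:ℝ) T, s ≠ u →
        ∃ D : EuclideanSpace ℝ (Fin d),
          HasDerivWithinAt (Γ u) D (Set.Icc (0:ℝ) T) s ∧ ‖D‖ < 1) := by
  set v : EuclideanSpace ℝ (Fin d) := γ T - γ 0 with hv
  refine ⟨fun u s => (1 - u / T) • γ s + (u / T) • (γ 0 + (s / T) • v), ?_, ?_, ?_, ?_, ?_⟩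
  · -- continuity
    have hγc : ContinuousOn γ (Set.Icc (0:ℝ) T) := fun s hs =>
      (hderiv s hs).continuousWithinAt
    apply ContinuousOn.add
    · exact ((continuous_const.sub (continuous_fst.div_const T)).continuousOn).smul
        (hγc.comp continuous_snd.continuousOn (fun p hp => hp.2))
    · exact ((continuous_fst.div_const T).continuousOn).smul
        (continuousOn_const.add
          (((continuous_snd.div_const T).continuousOn).smul continuousOn_const))
  · intro s hs; simp
  · intro s hs; field_simp; simp
  · intro u hu
    constructor
    · simp; module
    · have : (T : ℝ) / T = 1 := div_self hT.ne'
      simp [this, hv]; module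
  · intro u hu s hs hsu
    -- bound on γ'
    obtain ⟨s₀, hs₀, hmax⟩ := (isCompact_Icc).exists_isMaxOn ⟨0, Set.left_mem_Icc.2 hT.le⟩
      hcont.norm
    set C := ‖γ' s₀‖ with hC
    have hC1 : C < 1 := hspeed s₀ hs₀
    have hC0 : 0 ≤ C := norm_nonneg _
    have hvle : ‖v‖ ≤ C * T := by
      have := (convex_Icc (0:ℝ) T).norm_image_sub_le_of_norm_hasDerivWithin_le
        hderiv (fun x hx => hmax hx) (Set.left_mem_Icc.2 hT.le) (Set.right_mem_Icc.2 hT.le)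
      simpa [hv, abs_of_nonneg hT.le] using this
    refine ⟨(1 - u / T) • γ' s + (u / T) • ((1 / T) • v), ?_, ?_⟩
    · have h1 : HasDerivWithinAt (fun s : ℝ => s / T) (1 / T) (Set.Icc (0:ℝ) T) s :=
        (hasDerivWithinAt_id s _).div_const T
      have h2 := (h1.smul_const v).const_add (γ 0)
      exact ((hderiv s hs).const_smul (1 - u / T)).add (h2.const_smul (u / T))
    · set a := u / T with ha
      have ha0 : 0 ≤ a := div_nonneg hu.1 hT.le
      have ha1 : a ≤ 1 := (div_le_one hT).2 hu.2
      have hn1 : ‖(1 - a) • γ' s‖ = (1 - a) * ‖γ' s‖ := by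
        rw [norm_smul, Real.norm_eq_abs, abs_of_nonneg (by linarith)]
      have hn2 : ‖a • ((1 / T) • v)‖ = a * (1 / T * ‖v‖) := by
        rw [norm_smul, norm_smul, Real.norm_eq_abs, Real.norm_eq_abs,
          abs_of_nonneg ha0, abs_of_nonneg (by positivity)]
      have hvT : (1 / T) * ‖v‖ ≤ C := by
        rw [div_mul_eq_mul_div, one_mul, div_le_iff₀ hT]
        linarith [hvle]
      have hg := hspeed s hs
      have key : a * (1 / T * ‖v‖) ≤ a * C := mul_le_mul_of_nonneg_left hvT ha0
      have hfin : (1 - a) * ‖γ' s‖ + a * (1 / T * ‖v‖) < 1 := by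
        rcases lt_or_ge a 1 with h | h
        · have h1 : (1 - a) * ‖γ' s‖ < (1 - a) * 1 :=
            mul_lt_mul_of_pos_left hg (by linarith)
          have h2 : a * C ≤ a * 1 := mul_le_mul_of_nonneg_left hC1.le ha0
          nlinarith
        · have haeq : a = 1 := le_antisymm ha1 h
          rw [haeq]
          nlinarith
      calc ‖(1 - a) • γ' s + a • ((1 / T) • v)‖
          ≤ ‖(1 - a) • γ' s‖ + ‖a • ((1 / T) • v)‖ := norm_add_le _ _
        _ = (1 - a) * ‖γ' s‖ + a * (1 / T * ‖v‖) := by rw [hn1, hn2]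
        _ < 1 := hfin
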